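/- Let G be a hyperbolic random graph on n vertices with parameters α ∈ (1/2,1) and C ∈ ℝ, and fix τ > 0. Let I be any fixed angular interval consisting of at most w = e^{γ(n,τ)}·log^{(3)}(n) consecutive sectors of the sector decomposition. Then for every integer k > τ·log^{(2)}(n) and all sufficiently large n, the probability that exactly k of the n sampled points have angular coordinate in I is at most e^{−k/18}. -/

import Mathlib

open MeasureTheory ProbabilityTheory Filter Real Asymptotics

/-- Twice iterated natural logarithm. -/
noncomputable def loglog (n : ℕ) : ℝ := Real.log (Real.log n)

/-- Thrice iterated natural logarithm. -/
noncomputable def logloglog (n : ℕ) : ℝ := Real.log (Real.log (Real.log n))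

/-- `γ(n, τ) = log(τ·log^{(2)}(n) / (2·(log^{(3)}(n))²))`. -/
noncomputable def gam (n : ℕ) (τ : ℝ) : ℝ :=
  Real.log (τ * loglog n / (2 * (logloglog n) ^ 2))

/-- The radius `R = 2·log n + C` of the hyperbolic disk. -/
noncomputable def bigR (C : ℝ) (n : ℕ) : ℝ := 2 * Real.log n + C

/-- The threshold radius `ρ(n) = R − log((π/2)·e^{C/2}·γ(n,τ))`. -/
noncomputable def rho (C τ : ℝ) (n : ℕ) : ℝ :=
  bigR C n - Real.log (Real.pi / 2 * Real.exp (C / 2) * gam n τ)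

/-- `θ_n`, the maximal angular distance at which two points of radius `ρ(n)` are
adjacent in the hyperbolic disk of radius `R`. -/
noncomputable def theta (C τ : ℝ) (n : ℕ) : ℝ :=
  Real.arccos ((Real.cosh (rho C τ n) ^ 2 - Real.cosh (bigR C n)) /
    Real.sinh (rho C τ n) ^ 2)

/-- The number of sectors of angular width `θ_n` in the disk. -/
noncomputable def nSec (C τ : ℝ) (n : ℕ) : ℕ := ⌊2 * Real.pi / theta C τ n⌋₊

/-- The threshold `w = e^{γ(n,τ)}·log^{(3)}(n)` distinguishing narrow and wide runs. -/
noncomputable def wThr (n : ℕ) (τ : ℝ) : ℝ := Real.exp (gam n τ) * logloglog n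

/-- The index of the sector (among `n'` equal sectors of the disk) containing the
angle `φ`. -/
noncomputable def sectorIdx (n' : ℕ) (φ : ℝ) : ZMod n' :=
  ((⌊φ * n' / (2 * Real.pi)⌋ : ℤ) : ZMod n')

/-- `occupancy n' angles k` is `true` iff sector `k` contains the angular coordinate of
at least one of the points. -/
noncomputable def occupancy {n : ℕ} (n' : ℕ) (angles : Fin n → ℝ) (k : ZMod n') : Bool :=
  @decide (∃ i, sectorIdx n' (angles i) = k) (Classical.propDecidable _)

/-- The length of the maximal circular run of `true`s of `s` containing the index `i`;
`0` if `s i = false`. -/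
noncomputable def runLen {n' : ℕ} (s : ZMod n' → Bool) (i : ZMod n') : ℕ :=
  sSup {k : ℕ | k ≤ n' ∧ ∃ j : ZMod n',
    (∀ m : ℕ, m < k → s (j + (m : ZMod n')) = true) ∧
    ∃ t : ℕ, t < k ∧ i = j + (t : ZMod n')}

/-- The number of indices lying in a success run of length greater than `w`. -/
noncomputable def runSumGT {n' : ℕ} (w : ℝ) (s : ZMod n' → Bool) : ℕ :=
  Nat.card {i : ZMod n' | w < (runLen s i : ℝ)}

/-- The probability density of a point (angle, radius) of a hyperbolic random graph
with parameters `α` and disk radius `R`. -/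
noncomputable def hrgPDF (α R : ℝ) (p : ℝ × ℝ) : ℝ :=
  if 0 ≤ p.1 ∧ p.1 < 2 * Real.pi ∧ 0 ≤ p.2 ∧ p.2 ≤ R then
    (1 / (2 * Real.pi)) * (α * Real.sinh (α * p.2) / (Real.cosh (α * R) - 1))
  else 0

/-- The distribution of a single point (angle, radius) of a hyperbolic random graph. -/
noncomputable def hrgMeasure (α R : ℝ) : Measure (ℝ × ℝ) :=
  volume.withDensity fun p => ENNReal.ofReal (hrgPDF α R p)

/-- `pts` is a sample of a hyperbolic random graph on `n` vertices with parameters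
`α` and `C`: the points (angle, radius) are independent, each with the hyperbolic
density on the disk of radius `R = 2 log n + C`. -/
structure IsHRG (α C : ℝ) (n : ℕ) {Ω : Type*} [MeasurableSpace Ω] (μ : Measure Ω)
    (pts : Fin n → Ω → ℝ × ℝ) : Prop where
  meas : ∀ i, Measurable (pts i)
  indep : iIndepFun pts μ
  law : ∀ i, Measure.map (pts i) μ = hrgMeasure α (bigR C n)

/-- The number of sampled points whose angular coordinate lies in the angular interval
formed by the `ℓ` consecutive sectors `j, j+1, …, j+ℓ−1`. -/
noncomputable def ptsInWindow {n : ℕ} (n' : ℕ) (angles : Fin n → ℝ)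
    (j : ZMod n') (ℓ : ℕ) : ℕ :=
  Nat.card {i : Fin n | ∃ t : ℕ, t < ℓ ∧ sectorIdx n' (angles i) = j + (t : ZMod n')}


-- ==================== Auxiliary lemmas ====================

section Aux
open scoped ENNReal

lemma aux_pow_le_exp_mul_factorial : ∀ k : ℕ, (k:ℝ)^k ≤ Real.exp 1 ^ k * k.factorial := by
  intro k
  induction k with
  | zero => simp
  | succ k ih =>
    have hk0 : (0:ℝ) ≤ k := Nat.cast_nonneg k
    have key : ((k:ℝ)+1)^k ≤ Real.exp 1 * (k:ℝ)^k := by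
      rcases Nat.eq_zero_or_pos k with h | h
      · subst h; norm_num
      · have hkpos : (0:ℝ) < k := by exact_mod_cast h
        have h1 : ((k:ℝ)+1)^k = ((1 + 1/(k:ℝ))^k) * (k:ℝ)^k := by
          rw [← mul_pow]; congr 1; field_simp
        have h2 : (1 + 1/(k:ℝ))^k ≤ (Real.exp (1/(k:ℝ)))^k := by
          apply pow_le_pow_left₀ (by positivity)
          linarith [Real.add_one_le_exp (1/(k:ℝ))]
        have h3 : (Real.exp (1/(k:ℝ)))^k = Real.exp 1 := by
          rw [← Real.exp_nat_mul]; congr 1; field_simp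
        calc ((k:ℝ)+1)^k = ((1 + 1/(k:ℝ))^k) * (k:ℝ)^k := h1
          _ ≤ Real.exp 1 * (k:ℝ)^k := by
              rw [h3] at h2; exact mul_le_mul_of_nonneg_right h2 (by positivity)
    have hsplit : ((k:ℝ)+1)^(k+1) = ((k:ℝ)+1) * ((k:ℝ)+1)^k := by ring
    push_cast
    rw [hsplit]
    calc ((k:ℝ)+1) * ((k:ℝ)+1)^k ≤ ((k:ℝ)+1) * (Real.exp 1 * (k:ℝ)^k) := by
          exact mul_le_mul_of_nonneg_left key (by positivity)
      _ ≤ ((k:ℝ)+1) * (Real.exp 1 * (Real.exp 1 ^ k * k.factorial)) := by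
          have := ih
          gcongr
      _ = Real.exp 1 ^ (k+1) * (((k:ℝ)+1) * k.factorial) := by ring
      _ = Real.exp 1 ^ (k+1) * ((k+1).factorial) := by
          rw [Nat.factorial_succ]; push_cast; ring

lemma aux_choose_mul_pow_le {n k : ℕ} (p : ℝ) (hp : 0 ≤ p) (hk : 1 ≤ k)
    (h : (n:ℝ) * p ≤ Real.exp (-(19/18)) * k) :
    (n.choose k : ℝ) * p^k ≤ Real.exp (-(k:ℝ)/18) := by
  have hkpos : (0:ℝ) < k := by exact_mod_cast hk
  have hfac : (0:ℝ) < k.factorial := by exact_mod_cast k.factorial_pos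
  have h1 : (n.choose k : ℝ) * p^k ≤ ((n:ℝ)*p)^k / k.factorial := by
    have hc : (n.choose k : ℝ) ≤ (n:ℝ)^k / k.factorial := Nat.choose_le_pow_div k n
    calc (n.choose k : ℝ) * p^k ≤ ((n:ℝ)^k / k.factorial) * p^k :=
          mul_le_mul_of_nonneg_right hc (by positivity)
      _ = ((n:ℝ)*p)^k / k.factorial := by rw [mul_pow]; ring
  have hnp : (0:ℝ) ≤ (n:ℝ)*p := by positivity
  have h3 : (Real.exp (-(19/18)) * k)^k / k.factorial ≤ Real.exp (-(k:ℝ)/18) := by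
    have hf := aux_pow_le_exp_mul_factorial k
    have hkk : ((k:ℝ))^k / k.factorial ≤ Real.exp 1 ^ k := by
      rw [div_le_iff₀ hfac]; exact hf
    have hsplit : (Real.exp (-(19/18)) * k)^k / k.factorial
        = Real.exp (-(19/18))^k * ((k:ℝ)^k / k.factorial) := by
      rw [mul_pow]; ring
    rw [hsplit]
    calc Real.exp (-(19/18))^k * ((k:ℝ)^k / k.factorial)
        ≤ Real.exp (-(19/18))^k * Real.exp 1 ^ k := by
          exact mul_le_mul_of_nonneg_left hkk (by positivity)
      _ = (Real.exp (-(19/18)) * Real.exp 1)^k := by rw [mul_pow]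
      _ = Real.exp (-(1:ℝ)/18) ^ k := by rw [← Real.exp_add]; norm_num
      _ = Real.exp (-(k:ℝ)/18) := by
          rw [← Real.exp_nat_mul]; congr 1; ring
  calc (n.choose k : ℝ) * p^k ≤ ((n:ℝ)*p)^k / k.factorial := h1
    _ ≤ (Real.exp (-(19/18)) * k)^k / k.factorial := by
        have h2 : ((n:ℝ)*p)^k ≤ (Real.exp (-(19/18)) * k)^k := pow_le_pow_left₀ hnp h k
        gcongr
    _ ≤ Real.exp (-(k:ℝ)/18) := h3

lemma aux_measure_count_eq_le {Ω : Type*} [MeasurableSpace Ω] (μ : Measure Ω) {n : ℕ}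
    (f : Fin n → Ω → ℝ × ℝ)
    (hind : iIndepFun f μ)
    {B : Set (ℝ × ℝ)} (hB : MeasurableSet B) (q : ℝ≥0∞) (hq : ∀ i, μ (f i ⁻¹' B) ≤ q) (k : ℕ) :
    μ {ω | Nat.card {i : Fin n | f i ω ∈ B} = k} ≤ (n.choose k) * q^k := by
  classical
  have hsub : {ω | Nat.card {i : Fin n | f i ω ∈ B} = k} ⊆
      ⋃ S ∈ Finset.powersetCard k (Finset.univ : Finset (Fin n)), ⋂ i ∈ S, f i ⁻¹' B := by
    intro ω hω
    simp only [Set.mem_setOf_eq] at hω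
    set s : Set (Fin n) := {i : Fin n | f i ω ∈ B} with hs
    have hfin : s.Finite := Set.toFinite s
    have hcard : hfin.toFinset.card = k := by
      rw [Set.Finite.card_toFinset]
      simpa [Nat.card_eq_fintype_card, Nat.card_coe_set_eq, Set.ncard_eq_toFinset_card'] using hω
    simp only [Set.mem_iUnion]
    refine ⟨hfin.toFinset, Finset.mem_powersetCard.2 ⟨Finset.subset_univ _, hcard⟩, ?_⟩
    refine Set.mem_iInter₂.2 fun i hi => ?_
    have : i ∈ s := (Set.Finite.mem_toFinset hfin).1 hi
    exact this
  refine le_trans (measure_mono hsub) ?_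
  refine le_trans (measure_biUnion_finset_le _ _) ?_
  have hterm : ∀ S ∈ Finset.powersetCard k (Finset.univ : Finset (Fin n)),
      μ (⋂ i ∈ S, f i ⁻¹' B) ≤ q^k := by
    intro S hS
    have hcard : S.card = k := (Finset.mem_powersetCard.1 hS).2
    have heq := hind.measure_inter_preimage_eq_mul S (sets := fun _ => B) (fun i _ => hB)
    rw [heq]
    calc ∏ i ∈ S, μ (f i ⁻¹' B) ≤ ∏ _i ∈ S, q := Finset.prod_le_prod' fun i _ => hq i
      _ = q ^ k := by rw [Finset.prod_const, hcard]
  calc ∑ S ∈ Finset.powersetCard k (Finset.univ : Finset (Fin n)), μ (⋂ i ∈ S, f i ⁻¹' B)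
      ≤ ∑ _S ∈ Finset.powersetCard k (Finset.univ : Finset (Fin n)), q^k :=
        Finset.sum_le_sum hterm
    _ = (n.choose k) * q^k := by
        rw [Finset.sum_const, Finset.card_powersetCard, Finset.card_univ, Fintype.card_fin,
          nsmul_eq_mul]

lemma aux_measurable_sectorSet (n' : ℕ) (c : ZMod n') :
    MeasurableSet {φ : ℝ | sectorIdx n' φ = c} := by
  have h : {φ : ℝ | sectorIdx n' φ = c}
      = (fun φ : ℝ => (⌊φ * n' / (2 * Real.pi)⌋ : ℤ)) ⁻¹' {z : ℤ | (z : ZMod n') = c} := rfl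
  rw [h]
  exact (Int.measurable_floor.comp (by fun_prop)) (by trivial)

lemma aux_radial_lintegral (α R : ℝ) (hα : 0 < α) (hR : 0 < R) :
    ∫⁻ r in Set.Icc (0:ℝ) R,
      ENNReal.ofReal (α * Real.sinh (α * r) / (Real.cosh (α * R) - 1)) = 1 := by
  have hD : 0 < Real.cosh (α * R) - 1 := by
    have := Real.one_lt_cosh.2 (by positivity : α * R ≠ 0)
    linarith
  set h : ℝ → ℝ := fun r => α * Real.sinh (α * r) / (Real.cosh (α * R) - 1) with hh
  have hcont : Continuous h := by
    apply Continuous.div_const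
    exact continuous_const.mul (Real.continuous_sinh.comp (continuous_const.mul continuous_id))
  have hint : IntegrableOn h (Set.Icc 0 R) := hcont.integrableOn_Icc
  have hnn : 0 ≤ᵐ[volume.restrict (Set.Icc (0:ℝ) R)] h := by
    refine (ae_restrict_iff' measurableSet_Icc).2 (ae_of_all _ fun r hr => ?_)
    have : 0 ≤ Real.sinh (α * r) := Real.sinh_nonneg_iff.2 (by nlinarith [hr.1])
    positivity
  rw [← ofReal_integral_eq_lintegral_ofReal hint hnn]
  have hderiv : ∀ r ∈ Set.uIcc (0:ℝ) R,
      HasDerivAt (fun r => Real.cosh (α * r)) (α * Real.sinh (α * r)) r := by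
    intro r _
    have h1 : HasDerivAt (fun r : ℝ => α * r) α r := by
      simpa using (hasDerivAt_id r).const_mul α
    have h2 := (Real.hasDerivAt_cosh (α * r)).comp r h1
    exact h2.congr_deriv (by ring)
  have hint2 : IntervalIntegrable (fun r => α * Real.sinh (α * r)) volume 0 R :=
    (continuous_const.mul (Real.continuous_sinh.comp
      (continuous_const.mul continuous_id))).intervalIntegrable 0 R
  have key : ∫ r in (0:ℝ)..R, α * Real.sinh (α * r) = Real.cosh (α * R) - 1 := by
    rw [intervalIntegral.integral_eq_sub_of_hasDerivAt hderiv hint2]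
    simp
  have hval : ∫ r in Set.Icc (0:ℝ) R, h r = 1 := by
    rw [hh]
    simp only
    rw [MeasureTheory.integral_Icc_eq_integral_Ioc,
      ← intervalIntegral.integral_of_le hR.le]
    rw [intervalIntegral.integral_div, key]
    field_simp
  rw [hval, ENNReal.ofReal_one]

set_option maxHeartbeats 1000000 in
lemma aux_hrgMeasure_sector_le (α R : ℝ) (hα : 0 < α) (hR : 0 < R) (n' : ℕ) (hn' : 0 < n')
    (c : ZMod n') :
    hrgMeasure α R {p : ℝ × ℝ | sectorIdx n' p.1 = c} ≤ ENNReal.ofReal (1 / n') := by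
  haveI : NeZero n' := ⟨hn'.ne'⟩
  have hD : 0 < Real.cosh (α * R) - 1 := by
    have := Real.one_lt_cosh.2 (by positivity : α * R ≠ 0)
    linarith
  set T : Set ℝ := {φ : ℝ | sectorIdx n' φ = c} with hT
  have hTmeas : MeasurableSet T := aux_measurable_sectorSet n' c
  have hSeq : {p : ℝ × ℝ | sectorIdx n' p.1 = c} = T ×ˢ (Set.univ : Set ℝ) := by
    ext p; simp [hT]
  set F : ℝ → ℝ≥0∞ := Set.indicator (Set.Ico 0 (2*Real.pi))
    (fun _ => ENNReal.ofReal (1/(2*Real.pi))) with hF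
  set G : ℝ → ℝ≥0∞ := Set.indicator (Set.Icc 0 R)
    (fun r => ENNReal.ofReal (α * Real.sinh (α * r) / (Real.cosh (α * R) - 1))) with hG
  have hpdf : ∀ p : ℝ × ℝ, ENNReal.ofReal (hrgPDF α R p) = F p.1 * G p.2 := by
    intro p
    rw [hF, hG]
    unfold hrgPDF
    by_cases h1 : p.1 ∈ Set.Ico 0 (2*Real.pi)
    · by_cases h2 : p.2 ∈ Set.Icc 0 R
      · rw [Set.indicator_of_mem h1, Set.indicator_of_mem h2, if_pos]
        · rw [← ENNReal.ofReal_mul (by positivity)]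
        · exact ⟨h1.1, h1.2, h2.1, h2.2⟩
      · rw [Set.indicator_of_notMem h2, if_neg, ENNReal.ofReal_zero, mul_zero]
        simp only [Set.mem_Icc, not_and_or, not_le] at h2
        rintro ⟨-, -, ha, hb⟩
        rcases h2 with h2 | h2 <;> linarith
    · rw [Set.indicator_of_notMem h1, if_neg, ENNReal.ofReal_zero, zero_mul]
      simp only [Set.mem_Ico, not_and_or, not_le, not_lt] at h1
      rintro ⟨ha, hb, -, -⟩
      rcases h1 with h1 | h1 <;> linarith
  have hcalc : hrgMeasure α R {p : ℝ × ℝ | sectorIdx n' p.1 = c}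
      = (∫⁻ φ in T, F φ) * ∫⁻ r, G r := by
    rw [hrgMeasure, withDensity_apply _ (by rw [hSeq]; exact hTmeas.prod MeasurableSet.univ)]
    rw [hSeq]
    have hres : (volume : Measure (ℝ × ℝ)).restrict (T ×ˢ (Set.univ : Set ℝ))
        = (volume.restrict T).prod (volume.restrict Set.univ) := by
      rw [Measure.volume_eq_prod, Measure.prod_restrict]
    rw [hres]
    have hFm : Measurable F := (measurable_const.indicator measurableSet_Ico)
    have hGm : Measurable G := by
      apply Measurable.indicator _ measurableSet_Icc
      fun_prop
    calc ∫⁻ p, ENNReal.ofReal (hrgPDF α R p)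
          ∂((volume.restrict T).prod (volume.restrict Set.univ))
        = ∫⁻ p, F p.1 * G p.2 ∂((volume.restrict T).prod (volume.restrict Set.univ)) := by
          congr 1; ext p; exact hpdf p
      _ = (∫⁻ φ, F φ ∂(volume.restrict T)) * ∫⁻ r, G r ∂(volume.restrict Set.univ) :=
          lintegral_prod_mul hFm.aemeasurable hGm.aemeasurable
      _ = (∫⁻ φ in T, F φ) * ∫⁻ r, G r := by rw [Measure.restrict_univ]
  have hGint : ∫⁻ r, G r = 1 := by
    rw [hG, lintegral_indicator measurableSet_Icc]
    exact aux_radial_lintegral α R hα hR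
  have hFint : ∫⁻ φ in T, F φ ≤ ENNReal.ofReal (1 / n') := by
    rw [hF, lintegral_indicator measurableSet_Ico, Measure.restrict_restrict measurableSet_Ico,
      lintegral_const, Measure.restrict_apply MeasurableSet.univ, Set.univ_inter]
    have hsub : Set.Ico (0:ℝ) (2*Real.pi) ∩ T ⊆
        Set.Ico (2*Real.pi*(c.val)/n') (2*Real.pi*((c.val)+1)/n') := by
      rintro φ ⟨⟨hφ0, hφ2⟩, hφT⟩
      have hπ : (0:ℝ) < 2*Real.pi := by positivity
      have hx0 : 0 ≤ φ * n' / (2*Real.pi) := by positivity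
      have hxlt : φ * n' / (2*Real.pi) < n' := by
        rw [div_lt_iff₀ hπ]
        calc φ * n' ≤ φ * n' := le_rfl
          _ < 2*Real.pi * n' := by
              have : (0:ℝ) < n' := by exact_mod_cast hn'
              nlinarith
          _ = (n':ℝ) * (2*Real.pi) := by ring
      set z : ℤ := ⌊φ * n' / (2*Real.pi)⌋ with hz
      have hz0 : 0 ≤ z := Int.le_floor.2 (by exact_mod_cast hx0)
      have hzlt : z < n' := by
        have : (z:ℝ) < n' := lt_of_le_of_lt (Int.floor_le _) hxlt
        exact_mod_cast this
      have hcast : ((z.toNat : ℕ) : ZMod n') = c := by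
        have h0 : ((z : ℤ) : ZMod n') = c := hφT
        rwa [← Int.toNat_of_nonneg hz0, Int.cast_natCast] at h0
      have hlt : z.toNat < n' := by omega
      have hval : c.val = z.toNat := by rw [← hcast, ZMod.val_cast_of_lt hlt]
      have hzval : (z:ℝ) = (c.val : ℝ) := by
        rw [hval]
        have h' : (z.toNat : ℤ) = z := Int.toNat_of_nonneg hz0
        exact_mod_cast h'.symm
      have hfl : ((c.val:ℝ)) ≤ φ * n' / (2*Real.pi) ∧ φ * n' / (2*Real.pi) < (c.val:ℝ) + 1 := by
        constructor
        · rw [← hzval]; exact Int.floor_le _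
        · rw [← hzval]; exact Int.lt_floor_add_one _
      have hn'pos : (0:ℝ) < n' := by exact_mod_cast hn'
      constructor
      · rw [div_le_iff₀ hn'pos]
        have := hfl.1
        rw [le_div_iff₀ hπ] at this
        linarith
      · rw [lt_div_iff₀ hn'pos]
        have := hfl.2
        rw [div_lt_iff₀ hπ] at this
        linarith
    have hvol : volume (Set.Ico (0:ℝ) (2*Real.pi) ∩ T) ≤ ENNReal.ofReal (2*Real.pi/n') := by
      refine le_trans (measure_mono hsub) ?_
      rw [Real.volume_Ico]
      apply ENNReal.ofReal_le_ofReal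
      have hn'pos : (0:ℝ) < n' := by exact_mod_cast hn'
      rw [div_sub_div_same]
      apply le_of_eq; congr 1; ring
    calc ENNReal.ofReal (1/(2*Real.pi)) * volume (Set.Ico (0:ℝ) (2*Real.pi) ∩ T)
        ≤ ENNReal.ofReal (1/(2*Real.pi)) * ENNReal.ofReal (2*Real.pi/n') := by
          exact mul_le_mul_right hvol _
      _ = ENNReal.ofReal (1/(2*Real.pi) * (2*Real.pi/n')) := by
          rw [← ENNReal.ofReal_mul (by positivity)]
      _ = ENNReal.ofReal (1/n') := by
          congr 1
          have hπ : (0:ℝ) < 2*Real.pi := by positivity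
          field_simp
  calc hrgMeasure α R {p : ℝ × ℝ | sectorIdx n' p.1 = c}
      = (∫⁻ φ in T, F φ) * ∫⁻ r, G r := hcalc
    _ = (∫⁻ φ in T, F φ) := by rw [hGint, mul_one]
    _ ≤ ENNReal.ofReal (1 / n') := hFint

set_option maxHeartbeats 1000000 in
lemma aux_geom (C τ : ℝ) (n : ℕ)
    (hg1 : 1 ≤ gam n τ) (hgn : 100 * gam n τ ≤ (n:ℝ))
    (hR1 : 1 ≤ bigR C n) (hρ6 : 6 ≤ rho C τ n) (hRρ : bigR C n ≤ 2 * rho C τ n)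
    (hn : 1 ≤ n) :
    0 < nSec C τ n ∧ ((n:ℝ) / nSec C τ n ≤ (59/100) * gam n τ) := by
  set g := gam n τ with hgdef
  set R := bigR C n with hRdef
  set ρ := rho C τ n with hρdef
  have hg0 : (0:ℝ) < g := by linarith
  have hnR : (0:ℝ) < n := by exact_mod_cast hn
  set D : ℝ := Real.pi / 2 * Real.exp (C / 2) * g with hDdef
  have hπpos := Real.pi_pos
  have hECpos := Real.exp_pos (C/2)
  have hDpos : 0 < D := by positivity
  have hexpρ : Real.exp ρ = Real.exp R / D := by
    rw [hρdef, rho, Real.exp_sub, Real.exp_log hDpos]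
  have hexppos := Real.exp_pos ρ
  -- exp ρ * exp ρ ≥ 10
  have h10 : (10:ℝ) ≤ Real.exp ρ * Real.exp ρ := by
    have h4 : (5:ℝ) ≤ Real.exp 4 := by nlinarith only [Real.add_one_le_exp (4:ℝ)]
    have h8 : (25:ℝ) ≤ Real.exp 4 * Real.exp 4 := by nlinarith only [h4, Real.exp_pos (4:ℝ)]
    have hmono : Real.exp 4 ≤ Real.exp ρ := Real.exp_le_exp.2 (by linarith)
    nlinarith only [h8, hmono, Real.exp_pos (4:ℝ), Real.exp_pos ρ]
  have hsinh : (9/10) * Real.exp ρ / 2 ≤ Real.sinh ρ := by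
    rw [Real.sinh_eq]
    have hneg : Real.exp (-ρ) = (Real.exp ρ)⁻¹ := Real.exp_neg ρ
    have hkey : Real.exp (-ρ) ≤ (1/10) * Real.exp ρ := by
      rw [hneg, inv_le_iff_one_le_mul₀ hexppos]
      nlinarith only [h10, hexppos]
    linarith
  have hsinhpos : 0 < Real.sinh ρ := by nlinarith only [hsinh, hexppos]
  have hcoshR_ub : Real.cosh R - 1 ≤ Real.exp R / 2 := by
    rw [Real.cosh_eq]
    have : Real.exp (-R) ≤ 1 := Real.exp_le_one_iff.2 (by linarith)
    linarith
  have hcoshR_lb : 1 < Real.cosh R := Real.one_lt_cosh.2 (by linarith)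
  set y : ℝ := (Real.cosh R - 1) / Real.sinh ρ ^ 2 with hydef
  have hypos : 0 < y := div_pos (by linarith) (by positivity)
  set x : ℝ := (Real.cosh ρ ^ 2 - Real.cosh R) / Real.sinh ρ ^ 2 with hxdef
  have hcsq : Real.cosh ρ ^ 2 = Real.sinh ρ ^ 2 + 1 := by
    have := Real.cosh_sq ρ; linarith
  have hxy : x = 1 - y := by
    rw [hxdef, hydef]
    field_simp [hcsq]
    linarith [hcsq]
  have hx_le1 : x ≤ 1 := by rw [hxy]; linarith
  have hx_ge : -1 ≤ x := by
    rw [hxy]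
    have hmono : Real.cosh R ≤ Real.cosh (2*ρ) := by
      rw [Real.cosh_le_cosh, abs_of_nonneg (by linarith), abs_of_nonneg (by linarith)]
      exact hRρ
    have h2 : Real.cosh (2*ρ) = Real.cosh ρ ^ 2 + Real.sinh ρ ^ 2 := Real.cosh_two_mul ρ
    have hy2 : y ≤ 2 := by
      rw [hydef, div_le_iff₀ (by positivity)]
      nlinarith only [hmono, h2, hcsq]
    linarith
  set θ := theta C τ n with hθdef
  have hθx : θ = Real.arccos x := by rw [hθdef, theta, ← hρdef, ← hRdef, ← hxdef]
  have hcos : Real.cos θ = x := by rw [hθx]; exact Real.cos_arccos hx_ge hx_le1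
  have hθpos : 0 < θ := by
    rw [hθx]; exact Real.arccos_pos.2 (by linarith)
  have hθπ : θ ≤ Real.pi := by rw [hθx]; exact Real.arccos_le_pi x
  have hπ3 : (3:ℝ) < Real.pi := Real.pi_gt_three
  have hπ315 : Real.pi < 3.15 := Real.pi_lt_d2
  have hπsq : Real.pi^2 ≤ 10 := by nlinarith only [hπ3, hπ315]
  -- upper bound on y :  y ≤ (50/81) * (π² g² / n²)
  have hyub : y ≤ (50/81) * (Real.pi^2 * g^2 / (n:ℝ)^2) := by
    have hexpR : Real.exp R = (n:ℝ)^2 * Real.exp C := by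
      rw [hRdef, bigR, Real.exp_add]
      congr 1
      rw [two_mul, Real.exp_add, Real.exp_log hnR]; ring
    have hD2 : D^2 = Real.pi^2 / 4 * Real.exp C * g^2 := by
      have h : Real.exp (C/2) * Real.exp (C/2) = Real.exp C := by
        rw [← Real.exp_add, add_halves]
      calc D^2 = (Real.pi/2)^2 * (Real.exp (C/2) * Real.exp (C/2)) * g^2 := by
            rw [hDdef]; ring
        _ = Real.pi^2/4 * Real.exp C * g^2 := by rw [h]; ring
    have hs2 : ((9/10) * Real.exp ρ / 2)^2 ≤ Real.sinh ρ ^ 2 :=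
      pow_le_pow_left₀ (by positivity) hsinh 2
    have hyb : y ≤ (Real.exp R / 2) / (((9/10) * Real.exp ρ / 2)^2) := by
      rw [hydef]
      exact div_le_div₀ (by positivity) hcoshR_ub (by positivity) hs2
    have hcalc : (Real.exp R / 2) / (((9/10) * Real.exp ρ / 2)^2)
        = (200/81) * (D^2 / Real.exp R) := by
      rw [hexpρ]
      field_simp
      ring
    rw [hcalc, hexpR, hD2] at hyb
    have hEC := Real.exp_pos C
    have heq : (200/81:ℝ) * ((Real.pi^2/4 * Real.exp C * g^2) / ((n:ℝ)^2 * Real.exp C))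
        = (50/81) * (Real.pi^2 * g^2 / (n:ℝ)^2) := by
      field_simp
      ring
    linarith [heq ▸ hyb]
  have hgn' : g / (n:ℝ) ≤ 1/100 := by
    rw [div_le_div_iff₀ hnR (by norm_num)]
    linarith
  -- weak bound : θ ≤ 1/20
  have hweak : θ ≤ 1/17 := by
    have hjordan := Real.cos_le_one_sub_mul_cos_sq (x := θ) (by rw [abs_of_nonneg hθpos.le]; exact hθπ)
    rw [hcos, hxy] at hjordan
    -- 2/π² θ² ≤ y
    have hθ2 : 2/Real.pi^2 * θ^2 ≤ y := by linarith
    have hθ2' : θ^2 ≤ Real.pi^2/2 * y := by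
      rw [div_mul_eq_mul_div, div_le_iff₀ (by positivity)] at hθ2
      nlinarith only [hθ2, hπpos]
    have hP : Real.pi^2 * g^2 / (n:ℝ)^2 ≤ 10 * (1/100)^2 := by
      have h1 : Real.pi^2 * g^2 / (n:ℝ)^2 = Real.pi^2 * (g/(n:ℝ))^2 := by ring
      rw [h1]
      have h2 : (g/(n:ℝ))^2 ≤ (1/100)^2 := pow_le_pow_left₀ (by positivity) hgn' 2
      nlinarith only [h2, hπsq, sq_nonneg (g/(n:ℝ)), hπpos]
    have hθ2'' : θ^2 ≤ 31/10000 := by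
      calc θ^2 ≤ Real.pi^2/2 * y := hθ2'
        _ ≤ Real.pi^2/2 * ((50/81) * (Real.pi^2 * g^2/(n:ℝ)^2)) := by
            apply mul_le_mul_of_nonneg_left hyub (by positivity)
        _ ≤ 10/2 * ((50/81) * (10 * (1/100)^2)) := by
            apply mul_le_mul (by linarith) ?_ ?_ (by norm_num)
            · apply mul_le_mul_of_nonneg_left hP (by norm_num)
            · have := hyub; positivity
        _ ≤ 31/10000 := by norm_num
    nlinarith only [hθ2'', hθpos]
  -- sharp bound : θ ≤ (7/6) π g / n
  have hsharp : θ ≤ (7/6) * Real.pi * g / (n:ℝ) := by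
    have hb := Real.cos_bound (x := θ) (by rw [abs_of_nonneg hθpos.le]; linarith)
    rw [hcos, hxy, abs_of_nonneg hθpos.le] at hb
    have hb' : 1 - y - (1 - θ^2/2) ≤ θ^4 * (5/96) := (abs_le.1 hb).2
    have hθsq : θ^2 ≤ 1/100 := by nlinarith only [hweak, hθpos]
    have hθ4 : θ^4 ≤ (1/100) * θ^2 := by
      calc θ^4 = θ^2 * θ^2 := by ring
        _ ≤ (1/100) * θ^2 := mul_le_mul_of_nonneg_right hθsq (sq_nonneg θ)
    have hylb : (12/25) * θ^2 ≤ y := by linarith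
    have hθ2ub : θ^2 ≤ (25/12) * ((50/81) * (Real.pi^2 * g^2/(n:ℝ)^2)) := by
      nlinarith only [hylb, hyub]
    have hB : ((7/6) * Real.pi * g / (n:ℝ))^2 = (49/36) * (Real.pi^2 * g^2/(n:ℝ)^2) := by
      field_simp; ring
    have hBpos : 0 < (7/6) * Real.pi * g / (n:ℝ) := by positivity
    have hsq : θ^2 ≤ ((7/6) * Real.pi * g / (n:ℝ))^2 := by
      rw [hB]
      have hPnn : 0 ≤ Real.pi^2 * g^2/(n:ℝ)^2 := by positivity
      nlinarith only [hθ2ub, hPnn]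
    nlinarith only [hsq, hθpos, hBpos]
  -- floor estimates
  set X : ℝ := 2 * Real.pi / θ with hXdef
  have hXpos : 0 < X := by positivity
  have hX100 : 100 ≤ X := by
    rw [hXdef, le_div_iff₀ hθpos]
    nlinarith only [hweak, hπ3, hθpos]
  have hfl : X - 1 < (nSec C τ n : ℝ) := by
    rw [nSec, ← hθdef, ← hXdef]
    exact Nat.sub_one_lt_floor X
  have hn'lb : (99/100) * X ≤ (nSec C τ n : ℝ) := by nlinarith only [hfl, hX100]
  have hn'pos : 0 < nSec C τ n := by
    have : (0:ℝ) < (nSec C τ n : ℝ) := by nlinarith only [hn'lb, hX100]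
    exact_mod_cast this
  refine ⟨hn'pos, ?_⟩
  have hn'posR : (0:ℝ) < (nSec C τ n : ℝ) := by exact_mod_cast hn'pos
  have h1 : (n:ℝ) / nSec C τ n ≤ (n:ℝ) / ((99/100) * X) := by
    apply div_le_div_of_nonneg_left hnR.le (by nlinarith only [hX100]) hn'lb
  have h2 : (n:ℝ) / ((99/100) * X) = (50/(99*Real.pi)) * ((n:ℝ) * θ) := by
    rw [hXdef]
    rw [div_eq_iff (by positivity)]
    field_simp [hθpos.ne']
    ring
  have h3 : (n:ℝ) * θ ≤ (7/6) * Real.pi * g := by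
    have := mul_le_mul_of_nonneg_left hsharp hnR.le
    calc (n:ℝ) * θ ≤ (n:ℝ) * ((7/6) * Real.pi * g / (n:ℝ)) := this
      _ = (7/6) * Real.pi * g := by field_simp
  calc (n:ℝ) / nSec C τ n ≤ (50/(99*Real.pi)) * ((n:ℝ) * θ) := by rw [← h2]; exact h1
    _ ≤ (50/(99*Real.pi)) * ((7/6) * Real.pi * g) := by
        apply mul_le_mul_of_nonneg_left h3 (by positivity)
    _ = (350/594) * g := by field_simp; ring
    _ ≤ (59/100) * g := by nlinarith only [hg0]

lemma aux_log_le_two_mul_sqrt {x : ℝ} (hx : 0 < x) : Real.log x ≤ 2 * Real.sqrt x := by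
  have hs : 0 < Real.sqrt x := Real.sqrt_pos.2 hx
  have h1 : Real.log x = 2 * Real.log (Real.sqrt x) := by
    rw [Real.log_sqrt hx.le]; ring
  have h2 : Real.log (Real.sqrt x) ≤ Real.sqrt x - 1 := Real.log_le_sub_one_of_pos hs
  nlinarith only [h1, h2, hs]

lemma aux_sqrt_le_div_of_ge {x c : ℝ} (hc : 0 < c) (hx : c^2 ≤ x) : Real.sqrt x ≤ x / c := by
  have hxpos : 0 < x := lt_of_lt_of_le (by positivity) hx
  have h1 : c ≤ Real.sqrt x := by
    rw [show c = Real.sqrt (c^2) by rw [Real.sqrt_sq hc.le]]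
    exact Real.sqrt_le_sqrt hx
  have h2 : Real.sqrt x * Real.sqrt x = x := Real.mul_self_sqrt hxpos.le
  rw [le_div_iff₀ hc]
  nlinarith only [h1, h2, Real.sqrt_nonneg x]

lemma aux_eventual_hyps (C τ : ℝ) (hτ : 0 < τ) :
    ∀ᶠ n : ℕ in atTop, (0 < loglog n) ∧ (1 ≤ gam n τ) ∧
      (gam n τ ≤ (101/100) * logloglog n) ∧
      (100 * gam n τ ≤ (n:ℝ)) ∧ (1 ≤ bigR C n) ∧ (6 ≤ rho C τ n) ∧
      (bigR C n ≤ 2 * rho C τ n) ∧ (1 ≤ n) ∧ (1 ≤ logloglog n) := by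
  set A := |Real.log τ| with hA
  set B := |C| with hB
  set P := |Real.log (Real.pi/2)| with hP
  have t1 : Tendsto (fun n : ℕ => Real.log n) atTop atTop :=
    Real.tendsto_log_atTop.comp tendsto_natCast_atTop_atTop
  have t3 : Tendsto (fun n : ℕ => logloglog n) atTop atTop := by
    have := Real.tendsto_log_atTop.comp (Real.tendsto_log_atTop.comp t1)
    exact this
  have tn : Tendsto (fun n : ℕ => (n:ℝ)) atTop atTop := tendsto_natCast_atTop_atTop
  filter_upwards [t1.eventually_ge_atTop (164 + 2*(6 + A + B + P)),
    t3.eventually_ge_atTop (64 + 100*(2 + Real.log 2 + A)),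
    tn.eventually_ge_atTop ((800:ℝ)^2 + 200*A),
    eventually_ge_atTop 1] with n hlogn hL3 hnbig hn1
  set L2 := loglog n with hL2
  set L3 := logloglog n with hL3d
  have hlog2 : (0:ℝ) ≤ Real.log 2 := Real.log_nonneg (by norm_num)
  have hApos : 0 ≤ A := abs_nonneg _
  have hBpos : 0 ≤ B := abs_nonneg _
  have hPpos : 0 ≤ P := abs_nonneg _
  have hlogn100 : 100 ≤ Real.log n := by linarith
  have hlognpos : (0:ℝ) < Real.log n := by linarith
  have hL2ge1 : 1 ≤ L2 := by
    rw [hL2, loglog, Real.le_log_iff_exp_le hlognpos]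
    have := Real.exp_one_lt_d9
    linarith
  have hL2pos : 0 < L2 := by linarith
  have hL3ge64 : (64:ℝ) ≤ L3 := by linarith
  have hL3pos : (0:ℝ) < L3 := by linarith
  -- log L3 ≤ L3 / 4
  have hlogL3 : Real.log L3 ≤ L3 / 4 := by
    have h1 := aux_log_le_two_mul_sqrt hL3pos
    have h2 : Real.sqrt L3 ≤ L3 / 8 := aux_sqrt_le_div_of_ge (by norm_num) (by nlinarith only [hL3ge64])
    linarith
  have hlogL3nn : 0 ≤ Real.log L3 := Real.log_nonneg (by linarith)
  -- gam identity
  have hgam_eq : gam n τ = Real.log τ + L3 - Real.log 2 - 2 * Real.log L3 := by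
    rw [gam, Real.log_div (by positivity) (by positivity), Real.log_mul hτ.ne' hL2pos.ne',
      Real.log_mul (by norm_num) (by positivity), Real.log_pow]
    have : Real.log L2 = L3 := rfl
    rw [this]
    push_cast
    ring
  have hlogτ_lb : -A ≤ Real.log τ := neg_abs_le _
  have hlogτ_ub : Real.log τ ≤ A := le_abs_self _
  have hg1 : 1 ≤ gam n τ := by
    rw [hgam_eq]
    nlinarith only [hlogτ_lb, hlogL3, hL3ge64, hL3, hlog2, hApos]
  have hgle : gam n τ ≤ (101/100) * L3 := by
    rw [hgam_eq]
    nlinarith only [hlogτ_ub, hlogL3nn, hL3, hlog2, hApos]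
  have hgpos : 0 < gam n τ := by linarith
  -- L3 ≤ L2 ≤ log n
  have hL3leL2 : L3 ≤ L2 := by
    have h := Real.log_le_sub_one_of_pos hL2pos
    have h2 : Real.log L2 = L3 := rfl
    linarith [h2 ▸ h]
  have hL2lelogn : L2 ≤ Real.log n := by
    have h := Real.log_le_sub_one_of_pos hlognpos
    have h2 : Real.log (Real.log n) = L2 := rfl
    linarith [h2 ▸ h]
  have hgA : gam n τ ≤ A + L3 := by
    rw [hgam_eq]; nlinarith only [hlogτ_ub, hlogL3nn, hlog2]
  -- 100 g ≤ n
  have hnpos : (0:ℝ) < (n:ℝ) := by exact_mod_cast hn1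
  have hgn : 100 * gam n τ ≤ (n:ℝ) := by
    have hlogn_sqrt : Real.log n ≤ 2 * Real.sqrt n := aux_log_le_two_mul_sqrt hnpos
    have hsqrtn : Real.sqrt (n:ℝ) ≤ (n:ℝ) / 400 := by
      apply aux_sqrt_le_div_of_ge (by norm_num)
      nlinarith only [hnbig, hApos]
    have h1 : gam n τ ≤ A + Real.log n := by linarith [hL3leL2.trans hL2lelogn]
    nlinarith only [h1, hlogn_sqrt, hsqrtn, hnbig, hApos]
  -- bigR
  have hR1 : 1 ≤ bigR C n := by
    rw [bigR]
    have : -B ≤ C := neg_abs_le C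
    linarith
  -- log D expansion
  have hlogD : Real.log (Real.pi/2 * Real.exp (C/2) * gam n τ)
      = Real.log (Real.pi/2) + C/2 + Real.log (gam n τ) := by
    rw [Real.log_mul (by positivity) hgpos.ne', Real.log_mul (by positivity) (Real.exp_ne_zero _),
      Real.log_exp]
  have hloggam : Real.log (gam n τ) ≤ A + Real.log n := by
    have h1 : Real.log (gam n τ) ≤ gam n τ - 1 := Real.log_le_sub_one_of_pos hgpos
    linarith [hgA, hL3leL2.trans hL2lelogn]
  have hlogπ2_ub : Real.log (Real.pi/2) ≤ P := le_abs_self _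
  have hlogπ2_lb : -P ≤ Real.log (Real.pi/2) := neg_abs_le _
  have hCB : -B ≤ C ∧ C ≤ B := ⟨neg_abs_le C, le_abs_self C⟩
  have hρ6 : 6 ≤ rho C τ n := by
    rw [rho, hlogD, bigR]
    have := hCB.1
    nlinarith only [hloggam, hlogπ2_ub, hCB.1, hlogn, hApos, hBpos, hPpos]
  have hRρ : bigR C n ≤ 2 * rho C τ n := by
    rw [rho, hlogD, bigR]
    -- reduces to log(π/2) + log g ≤ log n
    have hlogg : Real.log (gam n τ) ≤ A + L2 := by
      have h1 : Real.log (gam n τ) ≤ gam n τ - 1 := Real.log_le_sub_one_of_pos hgpos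
      linarith [hgA, hL3leL2]
    have hL2small : L2 ≤ Real.log n / 2 := by
      have h1 : L2 ≤ 2 * Real.sqrt (Real.log n) := by
        have := aux_log_le_two_mul_sqrt hlognpos
        have h2 : Real.log (Real.log n) = L2 := rfl
        linarith [h2 ▸ this]
      have h2 : Real.sqrt (Real.log n) ≤ Real.log n / 4 := by
        apply aux_sqrt_le_div_of_ge (by norm_num)
        nlinarith only [hlogn100]
      linarith
    nlinarith only [hlogg, hlogπ2_ub, hL2small, hlogn, hApos, hPpos, hBpos, hCB.1, hCB.2]
  exact ⟨hL2pos, hg1, hgle, hgn, hR1, hρ6, hRρ, hn1, by linarith⟩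

end Aux

/-- **Tail bound for the number of vertices in a narrow run.**
For a family of hyperbolic random graphs on `n` vertices with parameters
`α ∈ (1/2,1)`, `C`, and fixed `τ > 0`: for all sufficiently large `n`, for every fixed
angular interval `I` made of at most `w = e^{γ}·log^{(3)} n` consecutive sectors and
every integer `k > τ·log^{(2)}(n)`, the probability that exactly `k` of the `n` sampled
points have angular coordinate in `I` is at most `e^{−k/18}`. -/
theorem narrow_run_vertex_count_tail
    (α C τ : ℝ) (hα : α ∈ Set.Ioo (1 / 2 : ℝ) 1) (hτ : 0 < τ)
    (Ω : ℕ → Type) (mΩ : ∀ n, MeasurableSpace (Ω n))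
    (μ : ∀ n, Measure (Ω n)) (hμ : ∀ n, IsProbabilityMeasure (μ n))
    (pts : ∀ n, Fin n → Ω n → ℝ × ℝ)
    (hhrg : ∀ n, IsHRG α C n (μ n) (pts n)) :
    ∀ᶠ n : ℕ in atTop, ∀ (j : ZMod (nSec C τ n)) (ℓ : ℕ), (ℓ : ℝ) ≤ wThr n τ →
      ∀ k : ℕ, τ * loglog n < (k : ℝ) →
        ((μ n) {ω |
            ptsInWindow (nSec C τ n) (fun i => (pts n i ω).1) j ℓ = k}).toReal ≤
          Real.exp (-(k : ℝ) / 18) := by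
  have hα0 : 0 < α := lt_trans (by norm_num) hα.1
  have hnum : (34/100:ℝ) ≤ Real.exp (-(19/18)) := by
    rw [Real.exp_neg, ← one_div, le_div_iff₀ (Real.exp_pos _)]
    have h1 : Real.exp ((19:ℝ)/18) = Real.exp 1 * Real.exp (1/18) := by
      rw [← Real.exp_add]; norm_num
    have h2 : Real.exp ((1:ℝ)/18) ≤ 18/17 := by
      have h3 := Real.add_one_le_exp (-(1/18):ℝ)
      have h4 : Real.exp (-(1/18):ℝ) * Real.exp ((1/18):ℝ) = 1 := by
        rw [← Real.exp_add]; norm_num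
      nlinarith only [h3, h4, Real.exp_pos ((1/18):ℝ)]
    have h5 : Real.exp 1 ≤ 2.7182818286 := Real.exp_one_lt_d9.le
    rw [h1]
    nlinarith only [h2, h5, Real.exp_pos ((1/18):ℝ), Real.exp_pos (1:ℝ)]
  filter_upwards [aux_eventual_hyps C τ hτ] with n hyp
  obtain ⟨hL2pos, hg1, hgle, hgn, hR1, hρ6, hRρ, hn1, hL31⟩ := hyp
  obtain ⟨hn'pos, hratio⟩ := aux_geom C τ n hg1 hgn hR1 hρ6 hRρ hn1
  set n' := nSec C τ n with hn'def
  set R := bigR C n with hRdef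
  intro j ℓ hℓ k hk
  have hR0 : 0 < R := by linarith
  set B : Set (ℝ × ℝ) :=
    {p : ℝ × ℝ | ∃ t : ℕ, t < ℓ ∧ sectorIdx n' p.1 = j + (t : ZMod n')} with hBdef
  have hBunion : B = ⋃ t ∈ Finset.range ℓ,
      {p : ℝ × ℝ | sectorIdx n' p.1 = j + (t : ZMod n')} := by
    ext p
    simp [hBdef, Finset.mem_range]
  have hBmeas : MeasurableSet B := by
    rw [hBunion]
    refine MeasurableSet.biUnion (Finset.range ℓ).countable_toSet fun t _ => ?_
    exact measurable_fst (aux_measurable_sectorSet n' (j + (t : ZMod n')))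
  have hn'Rpos : (0:ℝ) < n' := by exact_mod_cast hn'pos
  set p : ℝ := (ℓ:ℝ) / n' with hpdef
  have hp0 : 0 ≤ p := by positivity
  set q : ENNReal := ENNReal.ofReal p with hqdef
  have hqB : hrgMeasure α R B ≤ q := by
    rw [hBunion]
    refine le_trans (measure_biUnion_finset_le _ _) ?_
    have hterm : ∀ t ∈ Finset.range ℓ,
        hrgMeasure α R {p : ℝ × ℝ | sectorIdx n' p.1 = j + (t : ZMod n')}
          ≤ ENNReal.ofReal (1/n') := fun t _ =>
      aux_hrgMeasure_sector_le α R hα0 hR0 n' hn'pos _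
    refine le_trans (Finset.sum_le_sum hterm) ?_
    rw [Finset.sum_const, Finset.card_range, nsmul_eq_mul]
    rw [hqdef, hpdef]
    rw [show ((ℓ:ℝ) / (n':ℝ)) = (ℓ:ℝ) * (1/(n':ℝ)) by ring]
    rw [ENNReal.ofReal_mul (by positivity), ENNReal.ofReal_natCast]
  have hq : ∀ i, (μ n) (pts n i ⁻¹' B) ≤ q := by
    intro i
    have hlaw : (μ n) (pts n i ⁻¹' B) = hrgMeasure α R B := by
      rw [← Measure.map_apply ((hhrg n).meas i) hBmeas, (hhrg n).law i]
    rw [hlaw]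
    exact hqB
  have hmain := aux_measure_count_eq_le (μ n) (pts n) (hhrg n).indep hBmeas q hq k
  have hevent : {ω | ptsInWindow n' (fun i => (pts n i ω).1) j ℓ = k}
      = {ω | Nat.card {i : Fin n | pts n i ω ∈ B} = k} := rfl
  rw [hevent]
  -- convert to real inequality
  have hkτ : (0:ℝ) < τ * loglog n := by positivity
  have hk1 : 1 ≤ k := by
    by_contra h
    push_neg at h
    interval_cases k
    simp at hk
    linarith
  have hnp : (n:ℝ) * p ≤ Real.exp (-(19/18)) * k := by
    have hL3pos : (0:ℝ) < logloglog n := by linarith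
    have hgpos : (0:ℝ) < gam n τ := by linarith
    have hw0 : 0 < wThr n τ := by
      rw [wThr]; positivity
    have hs1 : (n:ℝ) * p = (ℓ:ℝ) * ((n:ℝ)/n') := by rw [hpdef]; ring
    have hs2 : (ℓ:ℝ) * ((n:ℝ)/n') ≤ wThr n τ * ((n:ℝ)/n') :=
      mul_le_mul_of_nonneg_right hℓ (by positivity)
    have hs3 : wThr n τ * ((n:ℝ)/n') ≤ wThr n τ * ((59/100) * gam n τ) :=
      mul_le_mul_of_nonneg_left hratio hw0.le
    have hexpg : Real.exp (gam n τ) = τ * loglog n / (2 * (logloglog n)^2) := by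
      rw [gam]
      exact Real.exp_log (by positivity)
    have hs4 : wThr n τ * ((59/100) * gam n τ)
        = (59/200) * (τ * loglog n) * (gam n τ / logloglog n) := by
      rw [wThr, hexpg]
      field_simp
      ring
    have hs5 : gam n τ / logloglog n ≤ 101/100 := by
      rw [div_le_iff₀ hL3pos]
      linarith
    have hs6 : (59/200) * (τ * loglog n) * (gam n τ / logloglog n)
        ≤ (34/100) * (τ * loglog n) := by
      have := mul_le_mul_of_nonneg_left hs5 (by positivity : (0:ℝ) ≤ (59/200) * (τ * loglog n))
      nlinarith only [this, hkτ]
    have hs7 : (34/100) * (τ * loglog n) ≤ (34/100) * k := by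
      nlinarith only [hk, hkτ]
    have hs8 : (34/100:ℝ) * k ≤ Real.exp (-(19/18)) * k := by
      have hk0 : (0:ℝ) ≤ k := Nat.cast_nonneg k
      nlinarith only [hnum, hk0]
    linarith
  have hreal : (n.choose k : ℝ) * p^k ≤ Real.exp (-(k:ℝ)/18) :=
    aux_choose_mul_pow_le p hp0 hk1 hnp
  have henn : (μ n) {ω | Nat.card {i : Fin n | pts n i ω ∈ B} = k}
      ≤ ENNReal.ofReal ((n.choose k : ℝ) * p^k) := by
    refine le_trans hmain (le_of_eq ?_)
    rw [hqdef, ← ENNReal.ofReal_pow hp0, ← ENNReal.ofReal_natCast (n.choose k),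
      ← ENNReal.ofReal_mul (by positivity)]
  calc ((μ n) {ω | Nat.card {i : Fin n | pts n i ω ∈ B} = k}).toReal
      ≤ (ENNReal.ofReal ((n.choose k : ℝ) * p^k)).toReal := by
        apply ENNReal.toReal_mono ENNReal.ofReal_ne_top henn
    _ = (n.choose k : ℝ) * p^k := ENNReal.toReal_ofReal (by positivity)
    _ ≤ Real.exp (-(k:ℝ)/18) := hreal
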